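/- Let A be the arrangement of 10 hyperplanes in ℝ^4 with defining forms α_1 = x_3, α_2 = x_3 − x_4, α_3 = x_2, α_4 = x_2 + x_3 − 2x_4, α_5 = x_1, α_6 = x_1 + x_3 − 2x_4, α_7 = x_2 + 2x_3 − 2x_4, α_8 = x_1 + 2x_3 − 2x_4, α_9 = x_1 + x_2 + x_3 − 2x_4, α_10 = x_4, and let φ : ℝ^10 → (ℝ^4)* send the i-th standard basis vector to α_i. Then ker φ has dimension 6 and is spanned by the seven vectors corresponding to the relations α_1 − α_2 − α_10 = 0, α_1 + α_4 − α_7 = 0, α_1 + α_6 − α_8 = 0, 2α_2 + α_3 − α_7 = 0, 2α_2 + α_5 − α_8 = 0, α_3 + α_6 − α_9 = 0, α_4 + α_5 − α_9 = 0; in particular, every relation is a linear combination of relations supported on exactly three forms, so A is formal. -/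

import Mathlib

open Module LinearMap Submodule

/-- The linear map `E(A) = ⊕_{H ∈ A} K·e_H → V*` sending `e_H` to the defining form `α_H`. -/
noncomputable def phiA {K V ι : Type*} [Field K] [AddCommGroup V] [Module K V] [Fintype ι]
    (α : ι → Module.Dual K V) : (ι → K) →ₗ[K] Module.Dual K V :=
  Fintype.linearCombination K α

/-- `F_2(A)`: the subspace of the relation space `F(A)` spanned by the relations
supported on exactly three hyperplanes. -/
noncomputable def F2A {K V ι : Type*} [Field K] [AddCommGroup V] [Module K V] [Fintype ι]
    (α : ι → Module.Dual K V) : Submodule K (ι → K) :=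
  Submodule.span K {c | c ∈ LinearMap.ker (phiA α) ∧ {i | c i ≠ 0}.ncard = 3}
/-- The coordinate form `x_{i+1} ∈ (ℝ^4)*`. -/
noncomputable def prBT (i : Fin 4) : Module.Dual ℝ (Fin 4 → ℝ) :=
  LinearMap.proj (R := ℝ) (φ := fun _ : Fin 4 => ℝ) i

/-- The ten defining forms of the arrangement of Brandt–Terao's Example 5.1:
`α₁ = x₃`, `α₂ = x₃ - x₄`, `α₃ = x₂`, `α₄ = x₂ + x₃ - 2x₄`, `α₅ = x₁`,
`α₆ = x₁ + x₃ - 2x₄`, `α₇ = x₂ + 2x₃ - 2x₄`, `α₈ = x₁ + 2x₃ - 2x₄`,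
`α₉ = x₁ + x₂ + x₃ - 2x₄`, `α₁₀ = x₄`. -/
noncomputable def alphaBT : Fin 10 → Module.Dual ℝ (Fin 4 → ℝ) :=
  ![prBT 2,
    prBT 2 - prBT 3,
    prBT 1,
    prBT 1 + prBT 2 - 2 • prBT 3,
    prBT 0,
    prBT 0 + prBT 2 - 2 • prBT 3,
    prBT 1 + 2 • prBT 2 - 2 • prBT 3,
    prBT 0 + 2 • prBT 2 - 2 • prBT 3,
    prBT 0 + prBT 1 + prBT 2 - 2 • prBT 3,
    prBT 3]

/-- The seven relations of length three among the forms `alphaBT`: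
`α₁ - α₂ - α₁₀`, `α₁ + α₄ - α₇`, `α₁ + α₆ - α₈`, `2α₂ + α₃ - α₇`, `2α₂ + α₅ - α₈`,
`α₃ + α₆ - α₉`, `α₄ + α₅ - α₉`. -/
noncomputable def relBT : Fin 7 → (Fin 10 → ℝ) :=
  ![![1, -1, 0, 0, 0, 0, 0, 0, 0, -1],
    ![1, 0, 0, 1, 0, 0, -1, 0, 0, 0],
    ![1, 0, 0, 0, 0, 1, 0, -1, 0, 0],
    ![0, 2, 1, 0, 0, 0, -1, 0, 0, 0],
    ![0, 2, 0, 0, 1, 0, 0, -1, 0, 0],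
    ![0, 0, 1, 0, 0, 1, 0, 0, -1, 0],
    ![0, 0, 0, 1, 1, 0, 0, 0, -1, 0]]
section VecLemmas
variable {α : Type*}
@[simp] private lemma mat10_0 (a0 a1 a2 a3 a4 a5 a6 a7 a8 a9 : α) : ![a0,a1,a2,a3,a4,a5,a6,a7,a8,a9] (0 : Fin 10) = a0 := rfl
@[simp] private lemma mat10_1 (a0 a1 a2 a3 a4 a5 a6 a7 a8 a9 : α) : ![a0,a1,a2,a3,a4,a5,a6,a7,a8,a9] (1 : Fin 10) = a1 := rfl
@[simp] private lemma mat10_2 (a0 a1 a2 a3 a4 a5 a6 a7 a8 a9 : α) : ![a0,a1,a2,a3,a4,a5,a6,a7,a8,a9] (2 : Fin 10) = a2 := rfl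
@[simp] private lemma mat10_3 (a0 a1 a2 a3 a4 a5 a6 a7 a8 a9 : α) : ![a0,a1,a2,a3,a4,a5,a6,a7,a8,a9] (3 : Fin 10) = a3 := rfl
@[simp] private lemma mat10_4 (a0 a1 a2 a3 a4 a5 a6 a7 a8 a9 : α) : ![a0,a1,a2,a3,a4,a5,a6,a7,a8,a9] (4 : Fin 10) = a4 := rfl
@[simp] private lemma mat10_5 (a0 a1 a2 a3 a4 a5 a6 a7 a8 a9 : α) : ![a0,a1,a2,a3,a4,a5,a6,a7,a8,a9] (5 : Fin 10) = a5 := rfl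
@[simp] private lemma mat10_6 (a0 a1 a2 a3 a4 a5 a6 a7 a8 a9 : α) : ![a0,a1,a2,a3,a4,a5,a6,a7,a8,a9] (6 : Fin 10) = a6 := rfl
@[simp] private lemma mat10_7 (a0 a1 a2 a3 a4 a5 a6 a7 a8 a9 : α) : ![a0,a1,a2,a3,a4,a5,a6,a7,a8,a9] (7 : Fin 10) = a7 := rfl
@[simp] private lemma mat10_8 (a0 a1 a2 a3 a4 a5 a6 a7 a8 a9 : α) : ![a0,a1,a2,a3,a4,a5,a6,a7,a8,a9] (8 : Fin 10) = a8 := rfl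
@[simp] private lemma mat10_9 (a0 a1 a2 a3 a4 a5 a6 a7 a8 a9 : α) : ![a0,a1,a2,a3,a4,a5,a6,a7,a8,a9] (9 : Fin 10) = a9 := rfl
@[simp] private lemma mat7_0 (a0 a1 a2 a3 a4 a5 a6 : α) : ![a0,a1,a2,a3,a4,a5,a6] (0 : Fin 7) = a0 := rfl
@[simp] private lemma mat7_1 (a0 a1 a2 a3 a4 a5 a6 : α) : ![a0,a1,a2,a3,a4,a5,a6] (1 : Fin 7) = a1 := rfl
@[simp] private lemma mat7_2 (a0 a1 a2 a3 a4 a5 a6 : α) : ![a0,a1,a2,a3,a4,a5,a6] (2 : Fin 7) = a2 := rfl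
@[simp] private lemma mat7_3 (a0 a1 a2 a3 a4 a5 a6 : α) : ![a0,a1,a2,a3,a4,a5,a6] (3 : Fin 7) = a3 := rfl
@[simp] private lemma mat7_4 (a0 a1 a2 a3 a4 a5 a6 : α) : ![a0,a1,a2,a3,a4,a5,a6] (4 : Fin 7) = a4 := rfl
@[simp] private lemma mat7_5 (a0 a1 a2 a3 a4 a5 a6 : α) : ![a0,a1,a2,a3,a4,a5,a6] (5 : Fin 7) = a5 := rfl
@[simp] private lemma mat7_6 (a0 a1 a2 a3 a4 a5 a6 : α) : ![a0,a1,a2,a3,a4,a5,a6] (6 : Fin 7) = a6 := rfl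
end VecLemmas

private lemma sum_univ_ten' {M : Type*} [AddCommMonoid M] (f : Fin 10 → M) :
    ∑ i, f i = f 0 + f 1 + f 2 + f 3 + f 4 + f 5 + f 6 + f 7 + f 8 + f 9 := by
  simp [Fin.sum_univ_succ, add_assoc]

private lemma sum_univ_seven' {M : Type*} [AddCommMonoid M] (f : Fin 7 → M) :
    ∑ i, f i = f 0 + f 1 + f 2 + f 3 + f 4 + f 5 + f 6 := by
  simp [Fin.sum_univ_succ, add_assoc]

private lemma phiA_eval' (c : Fin 10 → ℝ) (v : Fin 4 → ℝ) :
    phiA alphaBT c v =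
      c 0 * v 2 + c 1 * (v 2 - v 3) + c 2 * v 1 + c 3 * (v 1 + v 2 - 2*v 3)
      + c 4 * v 0 + c 5 * (v 0 + v 2 - 2*v 3) + c 6 * (v 1 + 2*v 2 - 2*v 3)
      + c 7 * (v 0 + 2*v 2 - 2*v 3) + c 8 * (v 0 + v 1 + v 2 - 2*v 3) + c 9 * v 3 := by
  have h : phiA alphaBT c = ∑ j, c j • alphaBT j := Fintype.linearCombination_apply ℝ alphaBT c
  rw [h]
  simp only [LinearMap.coe_sum, Finset.sum_apply]
  rw [sum_univ_ten' (fun j => (c j • alphaBT j) v)]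
  simp only [LinearMap.smul_apply, smul_eq_mul, alphaBT, mat10_0, mat10_1, mat10_2, mat10_3,
    mat10_4, mat10_5, mat10_6, mat10_7, mat10_8, mat10_9, LinearMap.add_apply,
    LinearMap.sub_apply, LinearMap.smul_apply, prBT, LinearMap.proj_apply]
  ring

@[simp] private lemma finval0 : ((0 : Fin 4) : ℕ) = 0 := rfl
@[simp] private lemma finval1 : ((1 : Fin 4) : ℕ) = 1 := rfl
@[simp] private lemma finval2 : ((2 : Fin 4) : ℕ) = 2 := rfl
@[simp] private lemma finval3 : ((3 : Fin 4) : ℕ) = 3 := rfl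

private lemma dual_eq_zero_iff' (f : Module.Dual ℝ (Fin 4 → ℝ)) :
    f = 0 ↔ ∀ i, f (Pi.single i 1) = 0 := by
  constructor
  · rintro rfl i; simp
  · intro h
    apply (Pi.basisFun ℝ (Fin 4)).ext
    intro i
    simpa [Pi.basisFun_apply] using h i

private lemma mem_ker_iff' (c : Fin 10 → ℝ) :
    c ∈ LinearMap.ker (phiA alphaBT) ↔
      (c 4 + c 5 + c 7 + c 8 = 0 ∧
       c 2 + c 3 + c 6 + c 8 = 0 ∧
       c 0 + c 1 + c 3 + c 5 + 2*c 6 + 2*c 7 + c 8 = 0 ∧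
       c 1 + 2*c 3 + 2*c 5 + 2*c 6 + 2*c 7 + 2*c 8 = c 9) := by
  rw [LinearMap.mem_ker, dual_eq_zero_iff']
  constructor
  · intro h
    have h0 := h 0
    have h1 := h 1
    have h2 := h 2
    have h3 := h 3
    rw [phiA_eval'] at h0 h1 h2 h3
    norm_num [Pi.single_apply, Fin.ext_iff] at h0 h1 h2 h3
    refine ⟨by linarith, by linarith, by linarith, by linarith⟩
  · rintro ⟨h0, h1, h2, h3⟩ i
    rw [phiA_eval']
    fin_cases i <;> norm_num [Pi.single_apply, Fin.ext_iff] <;> linarith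
@[simp] private lemma relv_0_0 : relBT 0 0 = 1 := rfl
@[simp] private lemma relv_0_1 : relBT 0 1 = (-1) := rfl
@[simp] private lemma relv_0_2 : relBT 0 2 = 0 := rfl
@[simp] private lemma relv_0_3 : relBT 0 3 = 0 := rfl
@[simp] private lemma relv_0_4 : relBT 0 4 = 0 := rfl
@[simp] private lemma relv_0_5 : relBT 0 5 = 0 := rfl
@[simp] private lemma relv_0_6 : relBT 0 6 = 0 := rfl
@[simp] private lemma relv_0_7 : relBT 0 7 = 0 := rfl
@[simp] private lemma relv_0_8 : relBT 0 8 = 0 := rfl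
@[simp] private lemma relv_0_9 : relBT 0 9 = (-1) := rfl
@[simp] private lemma relv_1_0 : relBT 1 0 = 1 := rfl
@[simp] private lemma relv_1_1 : relBT 1 1 = 0 := rfl
@[simp] private lemma relv_1_2 : relBT 1 2 = 0 := rfl
@[simp] private lemma relv_1_3 : relBT 1 3 = 1 := rfl
@[simp] private lemma relv_1_4 : relBT 1 4 = 0 := rfl
@[simp] private lemma relv_1_5 : relBT 1 5 = 0 := rfl
@[simp] private lemma relv_1_6 : relBT 1 6 = (-1) := rfl
@[simp] private lemma relv_1_7 : relBT 1 7 = 0 := rfl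
@[simp] private lemma relv_1_8 : relBT 1 8 = 0 := rfl
@[simp] private lemma relv_1_9 : relBT 1 9 = 0 := rfl
@[simp] private lemma relv_2_0 : relBT 2 0 = 1 := rfl
@[simp] private lemma relv_2_1 : relBT 2 1 = 0 := rfl
@[simp] private lemma relv_2_2 : relBT 2 2 = 0 := rfl
@[simp] private lemma relv_2_3 : relBT 2 3 = 0 := rfl
@[simp] private lemma relv_2_4 : relBT 2 4 = 0 := rfl
@[simp] private lemma relv_2_5 : relBT 2 5 = 1 := rfl
@[simp] private lemma relv_2_6 : relBT 2 6 = 0 := rfl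
@[simp] private lemma relv_2_7 : relBT 2 7 = (-1) := rfl
@[simp] private lemma relv_2_8 : relBT 2 8 = 0 := rfl
@[simp] private lemma relv_2_9 : relBT 2 9 = 0 := rfl
@[simp] private lemma relv_3_0 : relBT 3 0 = 0 := rfl
@[simp] private lemma relv_3_1 : relBT 3 1 = 2 := rfl
@[simp] private lemma relv_3_2 : relBT 3 2 = 1 := rfl
@[simp] private lemma relv_3_3 : relBT 3 3 = 0 := rfl
@[simp] private lemma relv_3_4 : relBT 3 4 = 0 := rfl
@[simp] private lemma relv_3_5 : relBT 3 5 = 0 := rfl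
@[simp] private lemma relv_3_6 : relBT 3 6 = (-1) := rfl
@[simp] private lemma relv_3_7 : relBT 3 7 = 0 := rfl
@[simp] private lemma relv_3_8 : relBT 3 8 = 0 := rfl
@[simp] private lemma relv_3_9 : relBT 3 9 = 0 := rfl
@[simp] private lemma relv_4_0 : relBT 4 0 = 0 := rfl
@[simp] private lemma relv_4_1 : relBT 4 1 = 2 := rfl
@[simp] private lemma relv_4_2 : relBT 4 2 = 0 := rfl
@[simp] private lemma relv_4_3 : relBT 4 3 = 0 := rfl
@[simp] private lemma relv_4_4 : relBT 4 4 = 1 := rfl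
@[simp] private lemma relv_4_5 : relBT 4 5 = 0 := rfl
@[simp] private lemma relv_4_6 : relBT 4 6 = 0 := rfl
@[simp] private lemma relv_4_7 : relBT 4 7 = (-1) := rfl
@[simp] private lemma relv_4_8 : relBT 4 8 = 0 := rfl
@[simp] private lemma relv_4_9 : relBT 4 9 = 0 := rfl
@[simp] private lemma relv_5_0 : relBT 5 0 = 0 := rfl
@[simp] private lemma relv_5_1 : relBT 5 1 = 0 := rfl
@[simp] private lemma relv_5_2 : relBT 5 2 = 1 := rfl
@[simp] private lemma relv_5_3 : relBT 5 3 = 0 := rfl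
@[simp] private lemma relv_5_4 : relBT 5 4 = 0 := rfl
@[simp] private lemma relv_5_5 : relBT 5 5 = 1 := rfl
@[simp] private lemma relv_5_6 : relBT 5 6 = 0 := rfl
@[simp] private lemma relv_5_7 : relBT 5 7 = 0 := rfl
@[simp] private lemma relv_5_8 : relBT 5 8 = (-1) := rfl
@[simp] private lemma relv_5_9 : relBT 5 9 = 0 := rfl
@[simp] private lemma relv_6_0 : relBT 6 0 = 0 := rfl
@[simp] private lemma relv_6_1 : relBT 6 1 = 0 := rfl
@[simp] private lemma relv_6_2 : relBT 6 2 = 0 := rfl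
@[simp] private lemma relv_6_3 : relBT 6 3 = 1 := rfl
@[simp] private lemma relv_6_4 : relBT 6 4 = 1 := rfl
@[simp] private lemma relv_6_5 : relBT 6 5 = 0 := rfl
@[simp] private lemma relv_6_6 : relBT 6 6 = 0 := rfl
@[simp] private lemma relv_6_7 : relBT 6 7 = 0 := rfl
@[simp] private lemma relv_6_8 : relBT 6 8 = (-1) := rfl
@[simp] private lemma relv_6_9 : relBT 6 9 = 0 := rfl
@[simp] private lemma finmk4_0 (h : 0 < 4) : (⟨0, h⟩ : Fin 4) = 0 := rfl
@[simp] private lemma finmk4_1 (h : 1 < 4) : (⟨1, h⟩ : Fin 4) = 1 := rfl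
@[simp] private lemma finmk4_2 (h : 2 < 4) : (⟨2, h⟩ : Fin 4) = 2 := rfl
@[simp] private lemma finmk4_3 (h : 3 < 4) : (⟨3, h⟩ : Fin 4) = 3 := rfl
@[simp] private lemma finmk7_0 (h : 0 < 7) : (⟨0, h⟩ : Fin 7) = 0 := rfl
@[simp] private lemma finmk7_1 (h : 1 < 7) : (⟨1, h⟩ : Fin 7) = 1 := rfl
@[simp] private lemma finmk7_2 (h : 2 < 7) : (⟨2, h⟩ : Fin 7) = 2 := rfl
@[simp] private lemma finmk7_3 (h : 3 < 7) : (⟨3, h⟩ : Fin 7) = 3 := rfl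
@[simp] private lemma finmk7_4 (h : 4 < 7) : (⟨4, h⟩ : Fin 7) = 4 := rfl
@[simp] private lemma finmk7_5 (h : 5 < 7) : (⟨5, h⟩ : Fin 7) = 5 := rfl
@[simp] private lemma finmk7_6 (h : 6 < 7) : (⟨6, h⟩ : Fin 7) = 6 := rfl
@[simp] private lemma finmk10_0 (h : 0 < 10) : (⟨0, h⟩ : Fin 10) = 0 := rfl
@[simp] private lemma finmk10_1 (h : 1 < 10) : (⟨1, h⟩ : Fin 10) = 1 := rfl
@[simp] private lemma finmk10_2 (h : 2 < 10) : (⟨2, h⟩ : Fin 10) = 2 := rfl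
@[simp] private lemma finmk10_3 (h : 3 < 10) : (⟨3, h⟩ : Fin 10) = 3 := rfl
@[simp] private lemma finmk10_4 (h : 4 < 10) : (⟨4, h⟩ : Fin 10) = 4 := rfl
@[simp] private lemma finmk10_5 (h : 5 < 10) : (⟨5, h⟩ : Fin 10) = 5 := rfl
@[simp] private lemma finmk10_6 (h : 6 < 10) : (⟨6, h⟩ : Fin 10) = 6 := rfl
@[simp] private lemma finmk10_7 (h : 7 < 10) : (⟨7, h⟩ : Fin 10) = 7 := rfl
@[simp] private lemma finmk10_8 (h : 8 < 10) : (⟨8, h⟩ : Fin 10) = 8 := rfl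
@[simp] private lemma finmk10_9 (h : 9 < 10) : (⟨9, h⟩ : Fin 10) = 9 := rfl

private lemma rel_mem_ker' (i : Fin 7) : relBT i ∈ LinearMap.ker (phiA alphaBT) := by
  rw [mem_ker_iff']
  fin_cases i <;> norm_num

private lemma ker_le_span' :
    LinearMap.ker (phiA alphaBT) ≤ Submodule.span ℝ (Set.range relBT) := by
  intro c hc
  obtain ⟨e1, e2, e3, e4⟩ := (mem_ker_iff' c).1 hc
  rw [mem_span_range_iff_exists_fun]
  refine ⟨![-(c 9), c 3, c 5 + c 8, c 2 + c 8, c 4, -(c 8), 0], ?_⟩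
  rw [sum_univ_seven' (fun i => _ • relBT i)]
  simp only [mat7_0, mat7_1, mat7_2, mat7_3, mat7_4, mat7_5, mat7_6]
  funext j
  simp only [Pi.add_apply, Pi.smul_apply, smul_eq_mul]
  fin_cases j <;> simp <;> linarith

private lemma range_top' : LinearMap.range (phiA alphaBT) = ⊤ := by
  rw [eq_top_iff]
  rintro f -
  refine ⟨![f (Pi.single 2 1), 0, f (Pi.single 1 1), 0, f (Pi.single 0 1), 0, 0, 0, 0,
    f (Pi.single 3 1)], ?_⟩
  apply (Pi.basisFun ℝ (Fin 4)).ext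
  intro i
  rw [Pi.basisFun_apply, phiA_eval']
  fin_cases i <;> norm_num [Pi.single_apply, Fin.ext_iff]

private lemma rel_supp' (i : Fin 7) : {j | relBT i j ≠ 0}.ncard = 3 := by
  rw [Set.ncard_eq_three]
  fin_cases i
  · exact ⟨0, 1, 9, by decide, by decide, by decide, by
      ext j; fin_cases j <;> norm_num <;> decide⟩
  · exact ⟨0, 3, 6, by decide, by decide, by decide, by
      ext j; fin_cases j <;> norm_num <;> decide⟩
  · exact ⟨0, 5, 7, by decide, by decide, by decide, by
      ext j; fin_cases j <;> norm_num <;> decide⟩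
  · exact ⟨1, 2, 6, by decide, by decide, by decide, by
      ext j; fin_cases j <;> norm_num <;> decide⟩
  · exact ⟨1, 4, 7, by decide, by decide, by decide, by
      ext j; fin_cases j <;> norm_num <;> decide⟩
  · exact ⟨2, 5, 8, by decide, by decide, by decide, by
      ext j; fin_cases j <;> norm_num <;> decide⟩
  · exact ⟨3, 4, 8, by decide, by decide, by decide, by
      ext j; fin_cases j <;> norm_num <;> decide⟩

/-- For the arrangement of ten hyperplanes in `ℝ⁴` with defining forms
`alphaBT`, the kernel of `φ : ℝ¹⁰ → (ℝ⁴)*` has dimension `6` and is spanned by the seven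
vectors `relBT` corresponding to relations supported on exactly three forms; in
particular `F(A) = F₂(A)`, i.e. `A` is formal. -/
theorem brandt_terao_example_formal :
    Module.finrank ℝ ↥(LinearMap.ker (phiA alphaBT)) = 6 ∧
    LinearMap.ker (phiA alphaBT) = Submodule.span ℝ (Set.range relBT) ∧
    LinearMap.ker (phiA alphaBT) = F2A alphaBT := by
  have hspan : LinearMap.ker (phiA alphaBT) = Submodule.span ℝ (Set.range relBT) := by
    refine le_antisymm ker_le_span' ?_
    rw [Submodule.span_le]
    rintro _ ⟨i, rfl⟩
    exact rel_mem_ker' i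
  have hrank : Module.finrank ℝ ↥(LinearMap.ker (phiA alphaBT)) = 6 := by
    have h := LinearMap.finrank_range_add_finrank_ker (phiA alphaBT)
    rw [range_top'] at h
    have h4 : Module.finrank ℝ (Module.Dual ℝ (Fin 4 → ℝ)) = 4 := by
      rw [Subspace.dual_finrank_eq]
      simp [Module.finrank_pi]
    rw [finrank_top, h4] at h
    have h10 : Module.finrank ℝ (Fin 10 → ℝ) = 10 := by simp [Module.finrank_pi]
    omega
  refine ⟨hrank, hspan, ?_⟩
  refine le_antisymm ?_ ?_
  · rw [hspan, Submodule.span_le]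
    rintro _ ⟨i, rfl⟩
    exact Submodule.subset_span ⟨rel_mem_ker' i, rel_supp' i⟩
  · rw [F2A, Submodule.span_le]
    exact fun c hc => hc.1
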